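/- Let G = (X ∪ Y, E) be X-semi-bipartite with Y finite, and let M be any maximum matching. If M is not Y-perfect, then Hall's condition fails: there exists S ⊆ Y with |N_G(S) ∩ X| < |S|. -/

import Mathlib

open SimpleGraph

lemma aux_card_verts {V : Type*} [Fintype V] {G : SimpleGraph V} {N : G.Subgraph}
    (h : N.IsMatching) : N.verts.ncard = 2 * N.edgeSet.ncard := by
  classical
  have hfin : Fintype N.verts := Set.Finite.fintype (Set.toFinite _)
  rw [Subgraph.isMatching_iff_forall_degree] at h
  have hd : ∀ x : N.verts, N.coe.degree x = 1 := by
    intro x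
    rw [Subgraph.coe_degree]
    convert h x.1 x.2
  have h1 : N.verts.toFinset.card = 2 * N.coe.edgeFinset.card := by
    rw [Set.toFinset_card, ← Finset.card_univ, Finset.card_eq_sum_ones,
      ← N.coe.sum_degrees_eq_twice_card_edges]
    apply Finset.sum_congr rfl
    intro x _
    convert (hd x).symm
  have h2 : N.coe.edgeFinset.card = N.edgeSet.ncard := by
    rw [← N.image_coe_edgeSet_coe]
    rw [Set.ncard_image_of_injective _ (Sym2.map.injective Subtype.val_injective)]
    rw [Set.ncard_eq_toFinset_card', Set.toFinset_card]
    convert Set.toFinset_card _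
    ext; simp
  rw [← h2, ← h1, Set.ncard_eq_toFinset_card']

/-- If a maximum matching `M` on an `X`-semi-bipartite graph is not `Y`-perfect,
then Hall's condition fails: some `S ⊆ Y` has `|N_G(S) ∩ X| < |S|`. -/
theorem semi_bipartite_not_perfect_hall_fails {V : Type*} [Fintype V] (G : SimpleGraph V)
    (X Y : Set V) (hdisj : Disjoint X Y) (hcover : X ∪ Y = Set.univ)
    (hind : ∀ a ∈ X, ∀ b ∈ X, ¬ G.Adj a b)
    (M : G.Subgraph) (hM : M.IsMatching)
    (hmax : ∀ M' : G.Subgraph, M'.IsMatching → M'.edgeSet.ncard ≤ M.edgeSet.ncard)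
    (hnotperf : ¬ Y ⊆ M.verts) :
    ∃ S ⊆ Y, ({w | ∃ u ∈ S, G.Adj u w} ∩ X).ncard < S.ncard := by
  classical
  by_contra hS
  push_neg at hS
  obtain ⟨y0, hy0Y, hy0M⟩ := Set.not_subset.mp hnotperf
  -- Hall's condition holds, get an injective system of representatives
  set t : Y → Finset V := fun y => (Set.toFinite {w | G.Adj ↑y w ∧ w ∈ X}).toFinset with ht
  have hmemt : ∀ (y : Y) (w : V), w ∈ t y ↔ G.Adj ↑y w ∧ w ∈ X := by
    intro y w; simp [ht, Set.Finite.mem_toFinset]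
  have hall : ∀ s : Finset Y, s.card ≤ (s.biUnion t).card := by
    intro s
    have hSsub : (Subtype.val '' (↑s : Set Y)) ⊆ Y := by
      rintro v ⟨y, _, rfl⟩; exact y.2
    have h1 := hS _ hSsub
    have heq : {w | ∃ u ∈ Subtype.val '' (↑s : Set Y), G.Adj u w} ∩ X
        = ↑(s.biUnion t) := by
      ext w
      simp only [Set.mem_inter_iff, Set.mem_setOf_eq, Finset.coe_biUnion,
        Set.mem_iUnion, Finset.mem_coe, Set.mem_image, Finset.mem_coe]
      constructor
      · rintro ⟨⟨u, ⟨y, hy, rfl⟩, hadj⟩, hwX⟩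
        exact ⟨y, hy, (hmemt y w).mpr ⟨hadj, hwX⟩⟩
      · rintro ⟨y, hy, hw⟩
        obtain ⟨hadj, hwX⟩ := (hmemt y w).mp hw
        exact ⟨⟨↑y, ⟨y, hy, rfl⟩, hadj⟩, hwX⟩
    rw [heq] at h1
    rw [Set.ncard_image_of_injective _ Subtype.val_injective, Set.ncard_coe_finset] at h1
    rw [Set.ncard_coe_finset] at h1
    exact h1
  obtain ⟨f, finj, hf⟩ := (Finset.all_card_le_biUnion_card_iff_existsInjective' t).mp hall
  have fX : ∀ y : Y, f y ∈ X := fun y => ((hmemt y (f y)).mp (hf y)).2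
  have fadj : ∀ y : Y, G.Adj ↑y (f y) := fun y => ((hmemt y (f y)).mp (hf y)).1
  -- the matching partner function
  set m : V → V := fun v => if h : v ∈ M.verts then (hM h).choose else v with hmdef
  have hm : ∀ v ∈ M.verts, M.Adj v (m v) := by
    intro v hv; simp only [hmdef, dif_pos hv]; exact (hM hv).choose_spec.1
  have hm_uniq : ∀ v ∈ M.verts, ∀ w, M.Adj v w → w = m v := by
    intro v hv w hw; simp only [hmdef, dif_pos hv]; exact (hM hv).choose_spec.2 w hw
  have hm_vert : ∀ v ∈ M.verts, m v ∈ M.verts := fun v hv => M.edge_vert (hm v hv).symm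
  have hm_invol : ∀ v ∈ M.verts, m (m v) = v := by
    intro v hv
    exact (hm_uniq (m v) (hm_vert v hv) v (hm v hv).symm).symm
  have hm_inj : ∀ v ∈ M.verts, ∀ w ∈ M.verts, m v = m w → v = w := by
    intro v hv w hw h
    rw [← hm_invol v hv, ← hm_invol w hw, h]
  -- extend f to V
  set f' : V → V := fun v => if h : v ∈ Y then f ⟨v, h⟩ else v with hf'def
  have hf'Y : ∀ v (h : v ∈ Y), f' v = f ⟨v, h⟩ := by
    intro v h; simp only [hf'def, dif_pos h]
  have hf'X : ∀ v ∈ Y, f' v ∈ X := by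
    intro v h; rw [hf'Y v h]; exact fX ⟨v, h⟩
  have hf'adj : ∀ v ∈ Y, G.Adj v (f' v) := by
    intro v h; rw [hf'Y v h]; exact fadj ⟨v, h⟩
  have hf'inj : ∀ v ∈ Y, ∀ w ∈ Y, f' v = f' w → v = w := by
    intro v hv w hw h
    rw [hf'Y v hv, hf'Y w hw] at h
    exact congrArg Subtype.val (finj h)
  -- the alternating sequence
  set g : ℕ → V := fun k => (fun v => m (f' v))^[k] y0 with hgdef
  have hg0 : g 0 = y0 := rfl
  have hgsucc : ∀ k, g (k + 1) = m (f' (g k)) := by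
    intro k; simp only [hgdef, Function.iterate_succ_apply']
  -- invariant: if all steps up to k were matched, g k ∈ Y, and for k > 0 it is matched
  have hA : ∀ k, (∀ j < k, f' (g j) ∈ M.verts) →
      g k ∈ Y ∧ (0 < k → g k ∈ M.verts ∧ m (g k) = f' (g (k - 1))) := by
    intro k
    induction k with
    | zero => intro _; exact ⟨hy0Y, by omega⟩
    | succ k ih =>
      intro hok
      have hk : f' (g k) ∈ M.verts := hok k (by omega)
      have hgkY : g k ∈ Y := (ih (fun j hj => hok j (by omega))).1
      have hxX : f' (g k) ∈ X := hf'X _ hgkY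
      have hadj : M.Adj (f' (g k)) (m (f' (g k))) := hm _ hk
      have hGadj : G.Adj (f' (g k)) (m (f' (g k))) := M.adj_sub hadj
      have hmY : m (f' (g k)) ∈ Y := by
        rcases (hcover ▸ Set.mem_univ (m (f' (g k))) : m (f' (g k)) ∈ X ∪ Y) with h | h
        · exact absurd hGadj (hind _ hxX _ h)
        · exact h
      refine ⟨by rw [hgsucc]; exact hmY, fun _ => ?_⟩
      rw [hgsucc]
      exact ⟨hm_vert _ hk, by simpa using hm_invol _ hk⟩
  -- injectivity of the sequence while it is defined
  have hBinj : ∀ a, ∀ b, a < b → (∀ j < b, f' (g j) ∈ M.verts) → g a ≠ g b := by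
    intro a
    induction a with
    | zero =>
      intro b hab hok heq
      have := (hA b (fun j hj => hok j hj)).2 hab
      rw [← heq, hg0] at this
      exact hy0M this.1
    | succ a ih =>
      intro b hab hok heq
      obtain ⟨b', rfl⟩ : ∃ b', b = b' + 1 := ⟨b - 1, by omega⟩
      rw [hgsucc, hgsucc] at heq
      have ha' : f' (g a) ∈ M.verts := hok a (by omega)
      have hb' : f' (g b') ∈ M.verts := hok b' (by omega)
      have h1 : f' (g a) = f' (g b') := hm_inj _ ha' _ hb' heq
      have hgaY : g a ∈ Y := (hA a (fun j hj => hok j (by omega))).1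
      have hgbY : g b' ∈ Y := (hA b' (fun j hj => hok j (by omega))).1
      have := hf'inj _ hgaY _ hgbY h1
      exact ih b' (by omega) (fun j hj => hok j (by omega)) this
  -- there is a first unmatched step
  have hex : ∃ k, f' (g k) ∉ M.verts := by
    by_contra hall'
    push_neg at hall'
    obtain ⟨a, b, hne, heq⟩ := Finite.exists_ne_map_eq_of_infinite g
    rcases hne.lt_or_gt with h | h
    · exact hBinj a b h (fun j _ => hall' j) heq
    · exact hBinj b a h (fun j _ => hall' j) heq.symm
  set n : ℕ := Nat.find hex with hndef
  have hxn : f' (g n) ∉ M.verts := Nat.find_spec hex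
  have hok : ∀ j < n, f' (g j) ∈ M.verts := by
    intro j hj
    by_contra h
    exact Nat.find_min hex (show j < Nat.find hex by omega) h
  have hYg : ∀ i ≤ n, g i ∈ Y := fun i hi =>
    (hA i (fun j hj => hok j (by omega))).1
  have hMg : ∀ i, 0 < i → i ≤ n → g i ∈ M.verts ∧ m (g i) = f' (g (i - 1)) := fun i h0 hi =>
    (hA i (fun j hj => hok j (by omega))).2 h0
  have hXx : ∀ i ≤ n, f' (g i) ∈ X := fun i hi => hf'X _ (hYg i hi)
  have hGxy : ∀ i ≤ n, G.Adj (g i) (f' (g i)) := fun i hi => hf'adj _ (hYg i hi)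
  have hginj : ∀ i ≤ n, ∀ j ≤ n, g i = g j → i = j := by
    intro i hi j hj heq
    by_contra hne
    rcases (Nat.lt_or_ge i j) with h | h
    · exact hBinj i j h (fun l hl => hok l (by omega)) heq
    · exact hBinj j i (by omega) (fun l hl => hok l (by omega)) heq.symm
  have hxinj : ∀ i ≤ n, ∀ j ≤ n, f' (g i) = f' (g j) → i = j := by
    intro i hi j hj heq
    exact hginj i hi j hj (hf'inj _ (hYg i hi) _ (hYg j hj) heq)
  have hedge : ∀ i, i < n → M.Adj (f' (g i)) (g (i + 1)) := by
    intro i hi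
    rw [hgsucc]
    exact hm _ (hok i hi)
  have hgx : ∀ i ≤ n, ∀ j ≤ n, g i ≠ f' (g j) := by
    intro i hi j hj heq
    exact (hdisj.ne_of_mem (hXx j hj) (hYg i hi)) heq.symm
  -- the augmented path vertex set
  set P : Set V := {v | ∃ i ≤ n, v = g i ∨ v = f' (g i)} with hPdef
  have hgP : ∀ i ≤ n, g i ∈ P := fun i hi => ⟨i, hi, Or.inl rfl⟩
  have hxP : ∀ i ≤ n, f' (g i) ∈ P := fun i hi => ⟨i, hi, Or.inr rfl⟩
  -- the augmented matching
  set M'' : G.Subgraph :=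
    { verts := M.verts ∪ P
      Adj := fun v w => (M.Adj v w ∧ v ∉ P ∧ w ∉ P) ∨
        (∃ i ≤ n, (v = g i ∧ w = f' (g i)) ∨ (w = g i ∧ v = f' (g i)))
      adj_sub := by
        rintro v w (⟨h, -, -⟩ | ⟨i, hi, ⟨rfl, rfl⟩ | ⟨rfl, rfl⟩⟩)
        · exact M.adj_sub h
        · exact hGxy i hi
        · exact (hGxy i hi).symm
      edge_vert := by
        rintro v w (⟨h, -, -⟩ | ⟨i, hi, ⟨rfl, rfl⟩ | ⟨rfl, rfl⟩⟩)
        · exact Or.inl (M.edge_vert h)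
        · exact Or.inr (hgP i hi)
        · exact Or.inr (hxP i hi)
      symm := by
        constructor
        rintro v w (⟨h, hv, hw⟩ | ⟨i, hi, ⟨rfl, rfl⟩ | ⟨rfl, rfl⟩⟩)
        · exact Or.inl ⟨h.symm, hw, hv⟩
        · exact Or.inr ⟨i, hi, Or.inr ⟨rfl, rfl⟩⟩
        · exact Or.inr ⟨i, hi, Or.inl ⟨rfl, rfl⟩⟩ } with hM''def
  -- M edges stay inside or outside P
  have hK2 : ∀ v ∈ M.verts, v ∉ P → m v ∉ P := by
    intro v hv hvP hmP
    obtain ⟨i, hi, h | h⟩ := hmP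
    · rcases Nat.eq_zero_or_pos i with rfl | hpos
      · rw [hg0] at h
        exact hy0M (h ▸ hm_vert v hv)
      · have := (hMg i hpos hi).2
        have hveq : v = f' (g (i - 1)) := by
          rw [← this, ← h, hm_invol v hv]
        exact hvP (hveq ▸ hxP (i - 1) (by omega))
    · rcases Nat.eq_or_lt_of_le hi with rfl | hlt
      · exact hxn (h ▸ hm_vert v hv)
      · have h2 : m (f' (g i)) = g (i + 1) := (hgsucc i).symm
        have hveq : v = g (i + 1) := by
          rw [← h2, ← h, hm_invol v hv]
        exact hvP (hveq ▸ hgP (i + 1) (by omega))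
  have hM'' : M''.IsMatching := by
    intro v hv
    by_cases hvP : v ∈ P
    · simp only [hPdef, Set.mem_setOf_eq] at hvP
      obtain ⟨i, hi, rfl | rfl⟩ := hvP
      · refine ⟨f' (g i), Or.inr ⟨i, hi, Or.inl ⟨rfl, rfl⟩⟩, ?_⟩
        rintro w (⟨-, hvp, -⟩ | ⟨j, hj, ⟨hgij, rfl⟩ | ⟨hw, hveq⟩⟩)
        · exact absurd (hgP i hi) hvp
        · rw [hginj i hi j hj hgij]
        · exact absurd hveq (hgx i hi j hj)
      · refine ⟨g i, Or.inr ⟨i, hi, Or.inr ⟨rfl, rfl⟩⟩, ?_⟩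
        rintro w (⟨-, hvp, -⟩ | ⟨j, hj, ⟨hveq, rfl⟩ | ⟨rfl, hxij⟩⟩)
        · exact absurd (hxP i hi) hvp
        · exact absurd hveq.symm (hgx j hj i hi)
        · rw [hxinj i hi j hj hxij]
    · have hvM : v ∈ M.verts := hv.resolve_right hvP
      refine ⟨m v, Or.inl ⟨hm v hvM, hvP, hK2 v hvM hvP⟩, ?_⟩
      rintro w (⟨hMvw, -, -⟩ | ⟨i, hi, ⟨rfl, rfl⟩ | ⟨rfl, rfl⟩⟩)
      · exact hm_uniq v hvM w hMvw
      · exact absurd (hgP i hi) hvP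
      · exact absurd (hxP i hi) hvP
  -- vertex count
  have hverts : M''.verts.ncard = M.verts.ncard + 2 := by
    have hveq : M''.verts = insert (g 0) (insert (f' (g n)) M.verts) := by
      apply Set.Subset.antisymm
      · rintro v (hv | ⟨i, hi, rfl | rfl⟩)
        · exact Set.mem_insert_of_mem _ (Set.mem_insert_of_mem _ hv)
        · rcases Nat.eq_zero_or_pos i with rfl | hpos
          · exact Set.mem_insert _ _
          · exact Set.mem_insert_of_mem _
              (Set.mem_insert_of_mem _ (hMg i hpos hi).1)
        · rcases Nat.eq_or_lt_of_le hi with rfl | hlt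
          · exact Set.mem_insert_of_mem _ (Set.mem_insert _ _)
          · exact Set.mem_insert_of_mem _ (Set.mem_insert_of_mem _ (hok i hlt))
      · rintro v hv
        rcases hv with rfl | rfl | hv
        · exact Or.inr (hgP 0 (by omega))
        · exact Or.inr (hxP n le_rfl)
        · exact Or.inl hv
    rw [hveq]
    have h1 : g 0 ∉ insert (f' (g n)) M.verts := by
      rintro (h | h)
      · exact hgx 0 (by omega) n le_rfl h
      · rw [hg0] at h; exact hy0M h
    have h2 : f' (g n) ∉ M.verts := hxn
    rw [Set.ncard_insert_of_notMem h1 (Set.toFinite _),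
      Set.ncard_insert_of_notMem h2 (Set.toFinite _)]
  have h1 := aux_card_verts hM
  have h2 := aux_card_verts hM''
  have h3 := hmax M'' hM''
  omega
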